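/- arXiv:2410.00541 — 2 statements merged into one kernel-verified Lean document; each statement's English description precedes it below -/
import Mathlib

section
/- Confluence of hyperedge replacement: if e₁ and e₂ are distinct hyperedges of a hypergraph H and R₁, R₂ are hypergraphs with type(Rᵢ) = type(eᵢ), then replacing e₁ first and then e₂ yields the same hypergraph (up to isomorphism) as replacing e₂ first and then e₁, and both equal the simultaneous replacement H[e₁/R₁, e₂/R₂]. -/
/-- A hypergraph over a label set `C`: finite sets of vertices and hyperedges,
an attachment list and a label for each hyperedge, and a duplicate-free list of
external nodes. -/
structure HGraph (C : Type) : Type 1 where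
  V : Type
  E : Type
  finV : Finite V
  finE : Finite E
  att : E → List V
  lab : E → C
  ext : List V
  ext_nodup : ext.Nodup

namespace HGraph

variable {C : Type}

/-- The size `|H| = |V_H| + |E_H|` of a hypergraph. -/
noncomputable def size (H : HGraph C) : ℕ := Nat.card H.V + Nat.card H.E

/-- Replacement `H[e/R]`: remove the hyperedge `e`, disjointly add the vertices and
hyperedges of `R`, and fuse the `i`-th external node of `R` with the `i`-th
attachment node of `e`. -/
noncomputable def replace (H : HGraph C) (e : H.E) (R : HGraph C)
    (hlen : R.ext.length = (H.att e).length) : HGraph C := by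
  classical
  exact
    { V := H.V ⊕ {v : R.V // v ∉ R.ext}
      E := {e' : H.E // e' ≠ e} ⊕ R.E
      finV := by haveI := H.finV; haveI := R.finV; infer_instance
      finE := by haveI := H.finE; haveI := R.finE; infer_instance
      att := fun x =>
        match x with
        | Sum.inl e' => (H.att e'.1).map Sum.inl
        | Sum.inr f => (R.att f).map (fun v =>
            if hv : v ∈ R.ext then
              Sum.inl ((H.att e).get ⟨R.ext.idxOf v, hlen ▸ List.idxOf_lt_length_iff.mpr hv⟩)
            else Sum.inr ⟨v, hv⟩)
      lab := fun x => match x with | Sum.inl e' => H.lab e'.1 | Sum.inr f => R.lab f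
      ext := H.ext.map Sum.inl
      ext_nodup := List.Nodup.map Sum.inl_injective H.ext_nodup }

/-- Isomorphism of hypergraphs. -/
structure Iso (H K : HGraph C) where
  vEquiv : H.V ≃ K.V
  eEquiv : H.E ≃ K.E
  att_eq : ∀ e, (H.att e).map vEquiv = K.att (eEquiv e)
  lab_eq : ∀ e, H.lab e = K.lab (eEquiv e)
  ext_eq : H.ext.map vEquiv = K.ext

def Iso.refl (H : HGraph C) : Iso H H :=
  ⟨Equiv.refl _, Equiv.refl _, by simp, by simp, by simp⟩

def Iso.symm {H K : HGraph C} (i : Iso H K) : Iso K H where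
  vEquiv := i.vEquiv.symm
  eEquiv := i.eEquiv.symm
  att_eq e := by
    have h := i.att_eq (i.eEquiv.symm e)
    simp only [Equiv.apply_symm_apply] at h
    rw [← h, List.map_map]
    simp
  lab_eq e := by
    have h := i.lab_eq (i.eEquiv.symm e)
    simp only [Equiv.apply_symm_apply] at h
    exact h.symm
  ext_eq := by
    rw [← i.ext_eq, List.map_map]
    simp

def Iso.trans {H K L : HGraph C} (i : Iso H K) (j : Iso K L) : Iso H L where
  vEquiv := i.vEquiv.trans j.vEquiv
  eEquiv := i.eEquiv.trans j.eEquiv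
  att_eq e := by
    simp only [Equiv.coe_trans, ← List.map_map, i.att_eq, j.att_eq]
    rfl
  lab_eq e := (i.lab_eq e).trans (j.lab_eq (i.eEquiv e))
  ext_eq := by
    simp only [Equiv.coe_trans, ← List.map_map, i.ext_eq, j.ext_eq]

/-- Hypergraphs up to isomorphism. -/
def isoSetoid (C : Type) : Setoid (HGraph C) :=
  ⟨fun H K => Nonempty (Iso H K),
   ⟨fun H => ⟨Iso.refl H⟩, fun ⟨i⟩ => ⟨i.symm⟩, fun ⟨i⟩ ⟨j⟩ => ⟨i.trans j⟩⟩⟩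

/-- The handle `A•` of a label `A` of type `n`: one hyperedge labelled `A`
attached to `n` pairwise distinct nodes, all of them external. -/
def handle (A : C) (n : ℕ) : HGraph C where
  V := Fin n
  E := PUnit
  finV := inferInstance
  finE := inferInstance
  att _ := List.finRange n
  lab _ := A
  ext := List.finRange n
  ext_nodup := List.nodup_finRange n

/-- `K` is (isomorphic to) the result of replacing `e` by `R` in `H`. -/
def IsRepl (H : HGraph C) (e : H.E) (R K : HGraph C) : Prop :=
  ∃ hlen : R.ext.length = (H.att e).length, Nonempty (Iso K (H.replace e R hlen))

/-- A direct derivation step using some production of `P`. -/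
def Step (P : Set (C × HGraph C)) (H K : HGraph C) : Prop :=
  ∃ p ∈ P, ∃ e : H.E, H.lab e = p.1 ∧ IsRepl H e p.2 K

/-- Derivations: the reflexive-transitive closure of `Step`. -/
def Derives (P : Set (C × HGraph C)) : HGraph C → HGraph C → Prop :=
  Relation.ReflTransGen (Step P)

/-- All hyperedges of `H` carry terminal labels. -/
def TerminalGraph (Tm : Set C) (H : HGraph C) : Prop := ∀ e : H.E, H.lab e ∈ Tm

/-- The language generated from the handle of `S` (of type `tyS`). -/
def Lang (P : Set (C × HGraph C)) (Tm : Set C) (S : C) (tyS : ℕ) :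
    Set (HGraph C) :=
  {H | Derives P (handle S tyS) H ∧ TerminalGraph Tm H}

end HGraph
namespace HGraph

variable {C : Type}

/-- Simultaneous replacement `H[repl]` of the set `B` of hyperedges of `H`:
each `e ∈ B` is removed, the vertices and hyperedges of `repl e` are disjointly
added, and the `i`-th external node of `repl e` is fused with the `i`-th
attachment node of `e`. -/
noncomputable def replaceSet (H : HGraph C) (B : Set H.E) (repl : H.E → HGraph C)
    (hlen : ∀ e ∈ B, (repl e).ext.length = (H.att e).length) : HGraph C := by
  classical
  exact
    { V := H.V ⊕ Σ e : B, {v : (repl e.1).V // v ∉ (repl e.1).ext}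
      E := {e : H.E // e ∉ B} ⊕ Σ e : B, (repl e.1).E
      finV := by
        haveI := H.finV; haveI := H.finE
        haveI : ∀ e : B, Finite {v : (repl e.1).V // v ∉ (repl e.1).ext} := by
          intro e; haveI := (repl e.1).finV; infer_instance
        infer_instance
      finE := by
        haveI := H.finE
        haveI : ∀ e : B, Finite (repl e.1).E := fun e => (repl e.1).finE
        infer_instance
      att := fun x =>
        match x with
        | Sum.inl e' => (H.att e'.1).map Sum.inl
        | Sum.inr ⟨e, f⟩ => ((repl e.1).att f).map (fun v =>
            if hv : v ∈ (repl e.1).ext then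
              Sum.inl ((H.att e.1).get ⟨(repl e.1).ext.idxOf v,
                hlen e.1 e.2 ▸ List.idxOf_lt_length_iff.mpr hv⟩)
            else Sum.inr ⟨e, v, hv⟩)
      lab := fun x =>
        match x with
        | Sum.inl e' => H.lab e'.1
        | Sum.inr ⟨e, f⟩ => (repl e.1).lab f
      ext := H.ext.map Sum.inl
      ext_nodup := List.Nodup.map Sum.inl_injective H.ext_nodup }

end HGraph

namespace HGraph

variable {C : Type}

lemma replaceSet_congr (H : HGraph C) {B B' : Set H.E} (hB : B = B')
    (repl : H.E → HGraph C)
    (h : ∀ e ∈ B, (repl e).ext.length = (H.att e).length)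
    (h' : ∀ e ∈ B', (repl e).ext.length = (H.att e).length) :
    H.replaceSet B repl h = H.replaceSet B' repl h' := by
  subst hB; rfl

/-- Equality gives an isomorphism. -/
def Iso.ofEq {H K : HGraph C} (h : H = K) : Iso H K := h ▸ Iso.refl H

lemma key_iso (H : HGraph C) (e₁ e₂ : H.E) (hne : e₁ ≠ e₂)
    (repl : H.E → HGraph C)
    (h₁ : (repl e₁).ext.length = (H.att e₁).length)
    (h₂' : (repl e₂).ext.length =
      ((H.replace e₁ (repl e₁) h₁).att (Sum.inl ⟨e₂, hne.symm⟩)).length)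
    (hlen : ∀ e ∈ ({e₁, e₂} : Set H.E), (repl e).ext.length = (H.att e).length) :
    Nonempty (Iso
      ((H.replace e₁ (repl e₁) h₁).replace (Sum.inl ⟨e₂, hne.symm⟩) (repl e₂) h₂')
      (H.replaceSet {e₁, e₂} repl hlen)) := by
  classical
  have he₁ : e₁ ∈ ({e₁, e₂} : Set H.E) := Set.mem_insert _ _
  have he₂ : e₂ ∈ ({e₁, e₂} : Set H.E) := Set.mem_insert_of_mem _ rfl
  let L := (H.replace e₁ (repl e₁) h₁).replace (Sum.inl ⟨e₂, hne.symm⟩) (repl e₂) h₂'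
  let M := H.replaceSet {e₁, e₂} repl hlen
  let vmap : L.V → M.V := fun x =>
    match x with
    | Sum.inl (Sum.inl v) => Sum.inl v
    | Sum.inl (Sum.inr v) => Sum.inr ⟨⟨e₁, he₁⟩, v⟩
    | Sum.inr v => Sum.inr ⟨⟨e₂, he₂⟩, v⟩
  have vbij : Function.Bijective vmap := by
    constructor
    · rintro ((v | v) | v) ((w | w) | w) h
      · obtain rfl := Sum.inl.inj h; rfl
      · exact absurd h Sum.inl_ne_inr
      · exact absurd h Sum.inl_ne_inr
      · exact absurd h Sum.inr_ne_inl
      · obtain ⟨-, h2⟩ := Sigma.mk.inj_iff.mp (Sum.inr.inj h)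
        obtain rfl := eq_of_heq h2; rfl
      · obtain ⟨h1, -⟩ := Sigma.mk.inj_iff.mp (Sum.inr.inj h)
        exact absurd (congrArg Subtype.val h1) hne
      · exact absurd h Sum.inr_ne_inl
      · obtain ⟨h1, -⟩ := Sigma.mk.inj_iff.mp (Sum.inr.inj h)
        exact absurd (congrArg Subtype.val h1) hne.symm
      · obtain ⟨-, h2⟩ := Sigma.mk.inj_iff.mp (Sum.inr.inj h)
        obtain rfl := eq_of_heq h2; rfl
    · rintro (v | ⟨⟨e, he⟩, v⟩)
      · exact ⟨Sum.inl (Sum.inl v), rfl⟩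
      · rcases Set.mem_insert_iff.mp he with rfl | he'
        · exact ⟨Sum.inl (Sum.inr v), rfl⟩
        · rcases Set.mem_singleton_iff.mp he' with rfl
          exact ⟨Sum.inr v, rfl⟩
  let emap : L.E → M.E := fun x =>
    match x with
    | Sum.inl ⟨Sum.inl ⟨e, he⟩, hf⟩ => Sum.inl ⟨e, by
        intro hmem
        rcases Set.mem_insert_iff.mp hmem with rfl | hmem'
        · exact he rfl
        · rcases Set.mem_singleton_iff.mp hmem' with rfl
          exact hf rfl⟩
    | Sum.inl ⟨Sum.inr f, _⟩ => Sum.inr ⟨⟨e₁, he₁⟩, f⟩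
    | Sum.inr g => Sum.inr ⟨⟨e₂, he₂⟩, g⟩
  have ebij : Function.Bijective emap := by
    constructor
    · rintro ((⟨(⟨e, he⟩ | f), hf⟩) | g) ((⟨(⟨e', he'⟩ | f'), hf'⟩) | g') h
      · obtain rfl : e = e' := congrArg Subtype.val (Sum.inl.inj h); rfl
      · exact absurd h Sum.inl_ne_inr
      · exact absurd h Sum.inl_ne_inr
      · exact absurd h Sum.inr_ne_inl
      · obtain ⟨-, h2⟩ := Sigma.mk.inj_iff.mp (Sum.inr.inj h)
        obtain rfl := eq_of_heq h2; rfl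
      · obtain ⟨h1, -⟩ := Sigma.mk.inj_iff.mp (Sum.inr.inj h)
        exact absurd (congrArg Subtype.val h1) hne
      · exact absurd h Sum.inr_ne_inl
      · obtain ⟨h1, -⟩ := Sigma.mk.inj_iff.mp (Sum.inr.inj h)
        exact absurd (congrArg Subtype.val h1) hne.symm
      · obtain ⟨-, h2⟩ := Sigma.mk.inj_iff.mp (Sum.inr.inj h)
        obtain rfl := eq_of_heq h2; rfl
    · rintro (⟨e, he⟩ | ⟨⟨e, he⟩, f⟩)
      · refine ⟨Sum.inl ⟨Sum.inl ⟨e, fun h => he (h ▸ he₁)⟩, ?_⟩, rfl⟩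
        intro h
        apply he
        have : e = e₂ := by
          have := Sum.inl.inj h
          exact congrArg Subtype.val this
        exact this ▸ he₂
      · rcases Set.mem_insert_iff.mp he with rfl | he'
        · exact ⟨Sum.inl ⟨Sum.inr f, Sum.inr_ne_inl⟩, rfl⟩
        · rcases Set.mem_singleton_iff.mp he' with rfl
          exact ⟨Sum.inr f, rfl⟩
  refine ⟨⟨Equiv.ofBijective vmap vbij, Equiv.ofBijective emap ebij, ?_, ?_, ?_⟩⟩
  · rintro ((⟨(⟨e, he⟩ | f), hf⟩) | g)
    · show (((H.att e).map Sum.inl).map Sum.inl).map vmap = (H.att e).map Sum.inl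
      exact List.map_map.trans (List.map_map.trans (List.map_congr_left fun _ _ => rfl))
    · simp only [L, M, replace, replaceSet, List.map_map]
      refine List.map_congr_left fun v _ => ?_
      by_cases hv : v ∈ (repl e₁).ext <;> simp [vmap, hv, Equiv.ofBijective] <;> rfl
    · simp only [L, M, replace, replaceSet, List.map_map]
      refine List.map_congr_left fun v _ => ?_
      by_cases hv : v ∈ (repl e₂).ext <;>
        simp [vmap, hv, Equiv.ofBijective, replace, List.get_eq_getElem, List.getElem_map] <;> rfl
  · rintro ((⟨(⟨e, he⟩ | f), hf⟩) | g) <;> rfl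
  · show ((H.ext.map Sum.inl).map Sum.inl).map vmap = H.ext.map Sum.inl
    exact List.map_map.trans (List.map_map.trans (List.map_congr_left fun _ _ => rfl))

end HGraph

/-- Confluence of hyperedge replacement: if `e₁ ≠ e₂` are
hyperedges of `H` and `R₁, R₂` have matching types, then replacing `e₁` first
and then `e₂` yields the same hypergraph (up to isomorphism) as replacing `e₂`
first and then `e₁`, and both are isomorphic to the simultaneous replacement
`H[e₁/R₁, e₂/R₂]`.  (After replacing `eᵢ`, the copy of the other hyperedge is
`Sum.inl ⟨eⱼ, _⟩`.) -/
theorem replace_confluent {C : Type} (H : HGraph C) (e₁ e₂ : H.E)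
    (hne : e₁ ≠ e₂) (R₁ R₂ : HGraph C)
    (h₁ : R₁.ext.length = (H.att e₁).length)
    (h₂ : R₂.ext.length = (H.att e₂).length)
    (h₂' : R₂.ext.length = ((H.replace e₁ R₁ h₁).att (Sum.inl ⟨e₂, hne.symm⟩)).length)
    (h₁' : R₁.ext.length = ((H.replace e₂ R₂ h₂).att (Sum.inl ⟨e₁, hne⟩)).length)
    (repl : H.E → HGraph C) (hr₁ : repl e₁ = R₁) (hr₂ : repl e₂ = R₂)
    (hlen : ∀ e ∈ ({e₁, e₂} : Set H.E), (repl e).ext.length = (H.att e).length) :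
    Nonempty (HGraph.Iso
      ((H.replace e₁ R₁ h₁).replace (Sum.inl ⟨e₂, hne.symm⟩) R₂ h₂')
      ((H.replace e₂ R₂ h₂).replace (Sum.inl ⟨e₁, hne⟩) R₁ h₁')) ∧
    Nonempty (HGraph.Iso
      ((H.replace e₁ R₁ h₁).replace (Sum.inl ⟨e₂, hne.symm⟩) R₂ h₂')
      (H.replaceSet {e₁, e₂} repl hlen)) ∧
    Nonempty (HGraph.Iso
      ((H.replace e₂ R₂ h₂).replace (Sum.inl ⟨e₁, hne⟩) R₁ h₁')
      (H.replaceSet {e₁, e₂} repl hlen)) := by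
  subst hr₁ hr₂
  obtain ⟨i⟩ := HGraph.key_iso H e₁ e₂ hne repl h₁ h₂' hlen
  have hlen' : ∀ e ∈ ({e₂, e₁} : Set H.E),
      (repl e).ext.length = (H.att e).length := by
    intro e he
    exact hlen e (by rwa [Set.pair_comm])
  obtain ⟨j⟩ := HGraph.key_iso H e₂ e₁ hne.symm repl h₂ h₁' hlen'
  have heq : H.replaceSet {e₂, e₁} repl hlen' = H.replaceSet {e₁, e₂} repl hlen :=
    HGraph.replaceSet_congr H (Set.pair_comm e₂ e₁) repl hlen' hlen
  let j' := j.trans (HGraph.Iso.ofEq heq)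
  exact ⟨⟨i.trans j'.symm⟩, ⟨i⟩, ⟨j'⟩⟩
end

section
/- Chomsky normal form transformation step (rhs splitting): if p = (A, R) has k > 2 hyperedges in R, let X be the subgraph of R induced by hyperedges e₂,…,e_k and their attachment nodes, introduce a fresh non-terminal T of type equal to type(X) with external nodes the union of attachments of e₂,…,e_k, and let R' be R with e₂,…,e_k replaced by a single T-labelled hyperedge e_T. Then replacing p by the two productions p' = (A, R') and p'' = (T, X) yields a grammar generating the same language, because R = R'[e_T/X]. -/
namespace HGraph

variable {C : Type}

open scoped Classical

theorem indexOf_map_inj {α β : Type*} [DecidableEq α] [DecidableEq β]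
    (l : List α) (f : α → β) (hf : Function.Injective f) (a : α) :
    (l.map f).idxOf (f a) = l.idxOf a := by
  induction l with
  | nil => rfl
  | cons b t ih =>
    simp only [List.map_cons, List.idxOf_cons, ih]
    have : (f b == f a) = (b == a) := by
      by_cases h : b = a <;> simp [h, beq_iff_eq, hf.eq_iff]
    rw [this]

theorem get_eq_of_eq {α : Type*} {l₁ l₂ : List α} (h : l₁ = l₂) {i : ℕ} (hi : i < l₁.length) :
    l₁.get ⟨i, hi⟩ = l₂.get ⟨i, h ▸ hi⟩ := by subst h; rfl

theorem get_map' {α β : Type*} (f : α → β) (l : List α) (i : ℕ) (h : i < (l.map f).length)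
    (h' : i < l.length) : (l.map f).get ⟨i, h⟩ = f (l.get ⟨i, h'⟩) := by
  simp [List.get_eq_getElem]

theorem get_congr {α : Type*} (l : List α) {i j : ℕ} (h : i = j) (hi : i < l.length)
    (hj : j < l.length) : l.get ⟨i, hi⟩ = l.get ⟨j, hj⟩ := by subst h; rfl

variable {C : Type}

lemma replace_lab_inl (H : HGraph C) (e : H.E) (R : HGraph C) (h) (e' : H.E) (hne : e' ≠ e) :
    (H.replace e R h).lab (Sum.inl ⟨e', hne⟩) = H.lab e' := rfl
lemma replace_lab_inr (H : HGraph C) (e : H.E) (R : HGraph C) (h) (f : R.E) :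
    (H.replace e R h).lab (Sum.inr f) = R.lab f := rfl
lemma replace_ext (H : HGraph C) (e : H.E) (R : HGraph C) (h) :
    (H.replace e R h).ext = H.ext.map Sum.inl := rfl
lemma replace_att_inl (H : HGraph C) (e : H.E) (R : HGraph C) (h) (e' : H.E) (hne : e' ≠ e) :
    (H.replace e R h).att (Sum.inl ⟨e', hne⟩) = (H.att e').map Sum.inl := rfl
lemma replace_att_inr (H : HGraph C) (e : H.E) (R : HGraph C) (h) (f : R.E)
    (p : ∀ v ∈ R.ext, R.ext.idxOf v < (H.att e).length) :
    (H.replace e R h).att (Sum.inr f) = (R.att f).map (fun v =>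
      if hv : v ∈ R.ext then Sum.inl ((H.att e).get ⟨R.ext.idxOf v, p v hv⟩)
      else Sum.inr ⟨v, hv⟩) := rfl

lemma att_len {H K : HGraph C} (i : Iso H K) (e : H.E) :
    (K.att (i.eEquiv e)).length = (H.att e).length := by
  rw [← i.att_eq]; simp

lemma ext_len {H K : HGraph C} (i : Iso H K) : K.ext.length = H.ext.length := by
  rw [← i.ext_eq]; simp

lemma mem_ext_iff {H K : HGraph C} (i : Iso H K) (v : H.V) :
    i.vEquiv v ∈ K.ext ↔ v ∈ H.ext := by
  rw [← i.ext_eq]; exact List.mem_map_of_injective i.vEquiv.injective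

lemma indexOf_ext {H K : HGraph C} (i : Iso H K) (v : H.V) :
    K.ext.idxOf (i.vEquiv v) = H.ext.idxOf v := by
  rw [← i.ext_eq]; exact indexOf_map_inj _ _ i.vEquiv.injective v

/-- Congruence of replacement in the replacing graph. -/
noncomputable def isoReplaceRight {H : HGraph C} (e : H.E) {R₁ R₂ : HGraph C}
    (i : Iso R₁ R₂) (h₁ : R₁.ext.length = (H.att e).length)
    (h₂ : R₂.ext.length = (H.att e).length) :
    Iso (H.replace e R₁ h₁) (H.replace e R₂ h₂) where
  vEquiv := Equiv.sumCongr (Equiv.refl _)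
    (i.vEquiv.subtypeEquiv fun v => not_congr (mem_ext_iff i v).symm)
  eEquiv := Equiv.sumCongr (Equiv.refl _) i.eEquiv
  att_eq := by
    rintro (⟨e', hne⟩ | f)
    · simp [replace_att_inl, List.map_map]; erw [List.map_map]; rfl
    · have p₁ : ∀ v ∈ R₁.ext, R₁.ext.idxOf v < (H.att e).length := fun v hv =>
        h₁ ▸ List.idxOf_lt_length_iff.mpr hv
      have p₂ : ∀ v ∈ R₂.ext, R₂.ext.idxOf v < (H.att e).length := fun v hv =>
        h₂ ▸ List.idxOf_lt_length_iff.mpr hv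
      show _ = (H.replace e R₂ h₂).att (Sum.inr (i.eEquiv f))
      erw [replace_att_inr H e R₁ h₁ f p₁, replace_att_inr H e R₂ h₂ (i.eEquiv f) p₂,
        ← i.att_eq, List.map_map, List.map_map]
      refine List.map_congr_left fun v _ => ?_
      by_cases hv : v ∈ R₁.ext
      · have hv2 : i.vEquiv v ∈ R₂.ext := (mem_ext_iff i v).mpr hv
        simp only [Function.comp_apply, Function.comp, dif_pos hv, dif_pos hv2, Equiv.sumCongr_apply, Sum.map_inl,
          Equiv.refl_apply]
        exact congrArg Sum.inl (get_congr _ ((indexOf_ext i v).symm) _ _)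
      · have hv2 : i.vEquiv v ∉ R₂.ext := fun h => hv ((mem_ext_iff i v).mp h)
        simp only [Function.comp_apply, Function.comp, dif_neg hv, dif_neg hv2, Equiv.sumCongr_apply, Sum.map_inr]
        rfl
  lab_eq := by rintro (⟨e', hne⟩ | f)
               · rfl
               · exact i.lab_eq f
  ext_eq := by
    show (H.ext.map Sum.inl).map _ = H.ext.map Sum.inl
    erw [List.map_map]
    exact List.map_congr_left fun a _ => rfl

/-- Congruence of replacement in the host graph. -/
noncomputable def isoReplaceLeft {H₁ H₂ : HGraph C} (i : Iso H₁ H₂) (e : H₁.E)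
    (R : HGraph C) (h₁ : R.ext.length = (H₁.att e).length)
    (h₂ : R.ext.length = (H₂.att (i.eEquiv e)).length) :
    Iso (H₁.replace e R h₁) (H₂.replace (i.eEquiv e) R h₂) where
  vEquiv := Equiv.sumCongr i.vEquiv (Equiv.refl _)
  eEquiv := Equiv.sumCongr (i.eEquiv.subtypeEquiv fun e' =>
    (not_congr ⟨fun h => i.eEquiv.injective h, fun h => h ▸ rfl⟩).symm) (Equiv.refl _)
  att_eq := by
    rintro (⟨e', hne⟩ | f)
    · show ((H₁.att e').map Sum.inl).map _ = (H₂.att (i.eEquiv e')).map Sum.inl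
      erw [← i.att_eq, List.map_map, List.map_map]; rfl
    · have p₁ : ∀ v ∈ R.ext, R.ext.idxOf v < (H₁.att e).length := fun v hv =>
        h₁ ▸ List.idxOf_lt_length_iff.mpr hv
      have p₂ : ∀ v ∈ R.ext, R.ext.idxOf v < (H₂.att (i.eEquiv e)).length := fun v hv =>
        h₂ ▸ List.idxOf_lt_length_iff.mpr hv
      rw [replace_att_inr H₁ e R h₁ f p₁]
      show _ = (H₂.replace (i.eEquiv e) R h₂).att (Sum.inr f)
      erw [replace_att_inr H₂ (i.eEquiv e) R h₂ f p₂, List.map_map]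
      refine List.map_congr_left fun v _ => ?_
      by_cases hv : v ∈ R.ext
      · simp only [Function.comp_apply, Function.comp, dif_pos hv, Equiv.sumCongr_apply, Sum.map_inl]
        refine congrArg Sum.inl ?_
        have hatt : H₂.att (i.eEquiv e) = (H₁.att e).map i.vEquiv := (i.att_eq e).symm
        exact ((get_eq_of_eq hatt _).trans (get_map' _ _ _ _ (h₁ ▸ List.idxOf_lt_length_iff.mpr hv))).symm
      · dsimp only [Function.comp]
        rw [dif_neg hv, dif_neg hv]; rfl
  lab_eq := by rintro (⟨e', hne⟩ | f)
               · exact i.lab_eq e'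
               · rfl
  ext_eq := by
    show (H₁.ext.map Sum.inl).map _ = H₂.ext.map Sum.inl
    erw [← i.ext_eq, List.map_map, List.map_map]; rfl


lemma mem_map_inl_iff {α β : Type*} {l : List α} {v : α} :
    (Sum.inl v : α ⊕ β) ∈ l.map Sum.inl ↔ v ∈ l :=
  List.mem_map_of_injective Sum.inl_injective

lemma inr_not_mem_map_inl {α β : Type*} {l : List α} (x : β) :
    (Sum.inr x : α ⊕ β) ∉ l.map Sum.inl := by simp

/-- Associativity of replacement. -/
noncomputable def isoAssoc (H : HGraph C) (e : H.E) (R' X : HGraph C) (eT : R'.E)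
    (h₁ : X.ext.length = (R'.att eT).length)
    (h₂ : (R'.replace eT X h₁).ext.length = (H.att e).length)
    (h₃ : R'.ext.length = (H.att e).length)
    (h₄ : X.ext.length = ((H.replace e R' h₃).att (Sum.inr eT)).length) :
    Iso (H.replace e (R'.replace eT X h₁) h₂) ((H.replace e R' h₃).replace (Sum.inr eT) X h₄) where
  vEquiv :=
    { toFun := fun w => match w with
        | Sum.inl h => Sum.inl (Sum.inl h)
        | Sum.inr ⟨Sum.inl v, hv⟩ => Sum.inl (Sum.inr ⟨v, fun hm => hv (mem_map_inl_iff.mpr hm)⟩)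
        | Sum.inr ⟨Sum.inr x, _⟩ => Sum.inr x
      invFun := fun w => match w with
        | Sum.inl (Sum.inl h) => Sum.inl h
        | Sum.inl (Sum.inr ⟨v, hv⟩) => Sum.inr ⟨Sum.inl v, fun hm => hv (mem_map_inl_iff.mp hm)⟩
        | Sum.inr x => Sum.inr ⟨Sum.inr x, inr_not_mem_map_inl x⟩
      left_inv := by rintro (h | ⟨v | x, hv⟩) <;> rfl
      right_inv := by rintro ((h | ⟨v, hv⟩) | x) <;> rfl }
  eEquiv :=
    { toFun := fun g => match g with
        | Sum.inl e' => Sum.inl ⟨Sum.inl e', fun h => Sum.inl_ne_inr h⟩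
        | Sum.inr (Sum.inl ⟨f, hf⟩) => Sum.inl ⟨Sum.inr f, fun h => hf (Sum.inr_injective h)⟩
        | Sum.inr (Sum.inr x) => Sum.inr x
      invFun := fun g => match g with
        | Sum.inl ⟨Sum.inl e', _⟩ => Sum.inl e'
        | Sum.inl ⟨Sum.inr f, h⟩ => Sum.inr (Sum.inl ⟨f, fun hh => h (by rw [hh])⟩)
        | Sum.inr x => Sum.inr (Sum.inr x)
      left_inv := by rintro (e' | (⟨f, hf⟩ | x)) <;> rfl
      right_inv := by rintro (⟨e' | f, h⟩ | x) <;> rfl }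
  att_eq := by
    rintro (⟨e', hne⟩ | (⟨f, hf⟩ | x))
    · show (((H.att e').map Sum.inl).map _)
        = ((H.replace e R' h₃).replace (Sum.inr eT) X h₄).att (Sum.inl ⟨Sum.inl ⟨e', hne⟩, _⟩)
      show _ = (((H.replace e R' h₃).att (Sum.inl ⟨e', hne⟩)).map Sum.inl)
      erw [replace_att_inl, List.map_map, List.map_map]
      rfl
    · -- edge of R', f != eT
      have pY : ∀ w ∈ (R'.replace eT X h₁).ext,
          (R'.replace eT X h₁).ext.idxOf w < (H.att e).length := fun w hw =>
        h₂ ▸ List.idxOf_lt_length_iff.mpr hw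
      have p₃ : ∀ v ∈ R'.ext, R'.ext.idxOf v < (H.att e).length := fun v hv =>
        h₃ ▸ List.idxOf_lt_length_iff.mpr hv
      show ((H.replace e (R'.replace eT X h₁) h₂).att (Sum.inr (Sum.inl ⟨f, hf⟩))).map _
        = ((H.replace e R' h₃).att (Sum.inr f)).map Sum.inl
      erw [replace_att_inr H e (R'.replace eT X h₁) h₂ (Sum.inl ⟨f, hf⟩) pY,
        replace_att_inr H e R' h₃ f p₃, replace_att_inl R' eT X h₁ f hf,
        List.map_map, List.map_map, List.map_map]
      refine List.map_congr_left fun v _ => ?_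
      dsimp only [Function.comp]
      by_cases hv : v ∈ R'.ext
      · erw [dif_pos (show (Sum.inl v : R'.V ⊕ {y : X.V // y ∉ X.ext}) ∈ (R'.replace eT X h₁).ext
              from mem_map_inl_iff.mpr hv), dif_pos hv]
        refine congrArg
          (fun z => (Sum.inl (Sum.inl z) : ((H.V ⊕ {v : R'.V // v ∉ R'.ext}) ⊕ {y : X.V // y ∉ X.ext})))
          (get_congr _ ?_ _ _)
        exact @indexOf_map_inj _ _ _ (fun a b => Classical.propDecidable (a = b))
          R'.ext Sum.inl Sum.inl_injective v
      · erw [dif_neg (show ¬ (Sum.inl v : R'.V ⊕ {y : X.V // y ∉ X.ext}) ∈ (R'.replace eT X h₁).ext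
              from fun hm => hv (mem_map_inl_iff.mp hm)), dif_neg hv]
        rfl
    · -- edge of X
      have pY : ∀ w ∈ (R'.replace eT X h₁).ext,
          (R'.replace eT X h₁).ext.idxOf w < (H.att e).length := fun w hw =>
        h₂ ▸ List.idxOf_lt_length_iff.mpr hw
      have p₃ : ∀ v ∈ R'.ext, R'.ext.idxOf v < (H.att e).length := fun v hv =>
        h₃ ▸ List.idxOf_lt_length_iff.mpr hv
      have pX : ∀ u ∈ X.ext, X.ext.idxOf u < (R'.att eT).length := fun u hu =>
        h₁ ▸ List.idxOf_lt_length_iff.mpr hu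
      have p₄ : ∀ u ∈ X.ext, X.ext.idxOf u < ((H.replace e R' h₃).att (Sum.inr eT)).length :=
        fun u hu => h₄ ▸ List.idxOf_lt_length_iff.mpr hu
      show ((H.replace e (R'.replace eT X h₁) h₂).att (Sum.inr (Sum.inr x))).map _
        = ((H.replace e R' h₃).replace (Sum.inr eT) X h₄).att (Sum.inr x)
      erw [replace_att_inr H e (R'.replace eT X h₁) h₂ (Sum.inr x) pY,
        replace_att_inr (H.replace e R' h₃) (Sum.inr eT) X h₄ x p₄,
        replace_att_inr R' eT X h₁ x pX, List.map_map, List.map_map]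
      refine List.map_congr_left fun u _ => ?_
      dsimp only [Function.comp]
      by_cases hu : u ∈ X.ext
      · rw [dif_pos hu, dif_pos hu]
        have hattT : (H.replace e R' h₃).att (Sum.inr eT) = (R'.att eT).map
            (fun v => if hv : v ∈ R'.ext then
              Sum.inl ((H.att e).get ⟨R'.ext.idxOf v, p₃ v hv⟩)
            else Sum.inr ⟨v, hv⟩) := replace_att_inr H e R' h₃ eT p₃
        erw [get_eq_of_eq hattT (p₄ u hu), get_map' _ _ _ _ (pX u hu)]
        by_cases hw : (R'.att eT).get ⟨X.ext.idxOf u, pX u hu⟩ ∈ R'.ext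
        · erw [dif_pos (show (Sum.inl ((R'.att eT).get ⟨X.ext.idxOf u, pX u hu⟩) :
                R'.V ⊕ {y : X.V // y ∉ X.ext}) ∈ (R'.replace eT X h₁).ext
              from mem_map_inl_iff.mpr hw), dif_pos hw]
          refine congrArg
            (fun z => (Sum.inl (Sum.inl z) : ((H.V ⊕ {v : R'.V // v ∉ R'.ext}) ⊕ {y : X.V // y ∉ X.ext})))
            (get_congr _ ?_ _ _)
          exact @indexOf_map_inj _ _ _ (fun a b => Classical.propDecidable (a = b))
            R'.ext Sum.inl Sum.inl_injective _
        · erw [dif_neg (show ¬ (Sum.inl ((R'.att eT).get ⟨X.ext.idxOf u, pX u hu⟩) :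
                R'.V ⊕ {y : X.V // y ∉ X.ext}) ∈ (R'.replace eT X h₁).ext
              from fun hm => hw (mem_map_inl_iff.mp hm)), dif_neg hw]
          rfl
      · rw [dif_neg hu, dif_neg hu]
        erw [dif_neg (show ¬ (Sum.inr ⟨u, hu⟩ : R'.V ⊕ {y : X.V // y ∉ X.ext}) ∈ (R'.replace eT X h₁).ext
              from inr_not_mem_map_inl _)]
        rfl
  lab_eq := by rintro (⟨e', hne⟩ | (⟨f, hf⟩ | x)) <;> rfl
  ext_eq := by
    show (H.ext.map Sum.inl).map _ = ((H.ext.map Sum.inl).map Sum.inl)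
    repeat erw [List.map_map]
    exact List.map_congr_left fun a _ => rfl

lemma sum_inl_sub_ne {α β : Type*} {p : α → Prop} {a b : α} {ha : p a} {hb : p b} (h : a ≠ b) :
    (Sum.inl ⟨a, ha⟩ : {x // p x} ⊕ β) ≠ Sum.inl ⟨b, hb⟩ := fun hh => h (by
  injection hh with hh
  exact congrArg Subtype.val hh)

lemma ne_of_sum_inl_sub_ne {α β : Type*} {p : α → Prop} {a b : α} {ha : p a} {hb : p b}
    (h : (Sum.inl ⟨a, ha⟩ : {x // p x} ⊕ β) ≠ Sum.inl ⟨b, hb⟩) : a ≠ b := fun hab => h (by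
  cases hab; rfl)

/-- Commutation of replacement at distinct hyperedges. -/
noncomputable def isoComm (H : HGraph C) {e f : H.E} (hef : e ≠ f) (R Q : HGraph C)
    (h₁ : R.ext.length = (H.att e).length)
    (h₂ : Q.ext.length = ((H.replace e R h₁).att (Sum.inl ⟨f, Ne.symm hef⟩)).length)
    (h₃ : Q.ext.length = (H.att f).length)
    (h₄ : R.ext.length = ((H.replace f Q h₃).att (Sum.inl ⟨e, hef⟩)).length) :
    Iso ((H.replace e R h₁).replace (Sum.inl ⟨f, Ne.symm hef⟩) Q h₂)
      ((H.replace f Q h₃).replace (Sum.inl ⟨e, hef⟩) R h₄) where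
  vEquiv :=
    { toFun := fun w => match w with
        | Sum.inl (Sum.inl h) => Sum.inl (Sum.inl h)
        | Sum.inl (Sum.inr r) => Sum.inr r
        | Sum.inr q => Sum.inl (Sum.inr q)
      invFun := fun w => match w with
        | Sum.inl (Sum.inl h) => Sum.inl (Sum.inl h)
        | Sum.inl (Sum.inr q) => Sum.inr q
        | Sum.inr r => Sum.inl (Sum.inr r)
      left_inv := by rintro ((h | r) | q) <;> rfl
      right_inv := by rintro ((h | q) | r) <;> rfl }
  eEquiv :=
    { toFun := fun g => match g with
        | Sum.inl ⟨Sum.inl ⟨e', he⟩, hne⟩ =>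
            Sum.inl ⟨Sum.inl ⟨e', ne_of_sum_inl_sub_ne hne⟩, sum_inl_sub_ne he⟩
        | Sum.inl ⟨Sum.inr r, _⟩ => Sum.inr r
        | Sum.inr q => Sum.inl ⟨Sum.inr q, fun h => Sum.inr_ne_inl h⟩
      invFun := fun g => match g with
        | Sum.inl ⟨Sum.inl ⟨e', he⟩, hne⟩ =>
            Sum.inl ⟨Sum.inl ⟨e', ne_of_sum_inl_sub_ne hne⟩, sum_inl_sub_ne he⟩
        | Sum.inl ⟨Sum.inr q, _⟩ => Sum.inr q
        | Sum.inr r => Sum.inl ⟨Sum.inr r, fun h => Sum.inr_ne_inl h⟩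
      left_inv := by rintro (⟨(⟨e', he⟩ | r), hne⟩ | q) <;> rfl
      right_inv := by rintro (⟨(⟨e', he⟩ | q), hne⟩ | r) <;> rfl }
  att_eq := by
    rintro (⟨(⟨e', he⟩ | r), hne⟩ | q)
    · show (((H.replace e R h₁).att (Sum.inl ⟨e', he⟩)).map Sum.inl).map _
        = ((H.replace f Q h₃).att (Sum.inl ⟨e', ne_of_sum_inl_sub_ne hne⟩)).map Sum.inl
      rw [replace_att_inl H e R h₁ e' he,
        replace_att_inl H f Q h₃ e' (ne_of_sum_inl_sub_ne hne)]
      repeat erw [List.map_map]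
      exact List.map_congr_left fun a _ => rfl
    · -- R-edge
      have pR : ∀ v ∈ R.ext, R.ext.idxOf v < (H.att e).length := fun v hv =>
        h₁ ▸ List.idxOf_lt_length_iff.mpr hv
      have pR₂ : ∀ v ∈ R.ext,
          R.ext.idxOf v < ((H.replace f Q h₃).att (Sum.inl ⟨e, hef⟩)).length := fun v hv =>
        h₄ ▸ List.idxOf_lt_length_iff.mpr hv
      show (((H.replace e R h₁).att (Sum.inr r)).map Sum.inl).map _
        = ((H.replace f Q h₃).replace (Sum.inl ⟨e, hef⟩) R h₄).att (Sum.inr r)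
      rw [replace_att_inr H e R h₁ r pR,
        replace_att_inr (H.replace f Q h₃) (Sum.inl ⟨e, hef⟩) R h₄ r pR₂]
      repeat erw [List.map_map]
      refine List.map_congr_left fun v _ => ?_
      dsimp only [Function.comp]
      by_cases hv : v ∈ R.ext
      · erw [dif_pos hv, dif_pos hv,
          get_eq_of_eq (replace_att_inl H f Q h₃ e hef) (pR₂ v hv),
          get_map' _ _ _ _ (pR v hv)]
        rfl
      · rw [dif_neg hv, dif_neg hv]
        rfl
    · -- Q-edge
      have pQ : ∀ u ∈ Q.ext, Q.ext.idxOf u < (H.att f).length := fun u hu =>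
        h₃ ▸ List.idxOf_lt_length_iff.mpr hu
      have pQ₁ : ∀ u ∈ Q.ext,
          Q.ext.idxOf u < ((H.replace e R h₁).att (Sum.inl ⟨f, Ne.symm hef⟩)).length :=
        fun u hu => h₂ ▸ List.idxOf_lt_length_iff.mpr hu
      show (((H.replace e R h₁).replace (Sum.inl ⟨f, Ne.symm hef⟩) Q h₂).att (Sum.inr q)).map _
        = ((H.replace f Q h₃).att (Sum.inr q)).map Sum.inl
      rw [replace_att_inr (H.replace e R h₁) (Sum.inl ⟨f, Ne.symm hef⟩) Q h₂ q pQ₁,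
        replace_att_inr H f Q h₃ q pQ]
      repeat erw [List.map_map]
      refine List.map_congr_left fun u _ => ?_
      dsimp only [Function.comp]
      by_cases hu : u ∈ Q.ext
      · erw [dif_pos hu, dif_pos hu,
          get_eq_of_eq (replace_att_inl H e R h₁ f (Ne.symm hef)) (pQ₁ u hu),
          get_map' _ _ _ _ (pQ u hu)]
        rfl
      · rw [dif_neg hu, dif_neg hu]
        rfl
  lab_eq := by rintro (⟨(⟨e', he⟩ | r), hne⟩ | q) <;> rfl
  ext_eq := by
    show ((H.ext.map Sum.inl).map Sum.inl).map _ = (H.ext.map Sum.inl).map Sum.inl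
    repeat erw [List.map_map]
    exact List.map_congr_left fun a _ => rfl

noncomputable def isoReplaceEdgeCongr (H : HGraph C) {e e' : H.E} (h : e = e')
    (R : HGraph C) (hl : R.ext.length = (H.att e).length)
    (hl' : R.ext.length = (H.att e').length) :
    Iso (H.replace e R hl) (H.replace e' R hl') := by subst h; exact Iso.refl _

lemma replace_att_inr_len (H : HGraph C) (e : H.E) (R : HGraph C) (h) (f : R.E) :
    ((H.replace e R h).att (Sum.inr f)).length = (R.att f).length := by
  rw [replace_att_inr H e R h f (fun v hv => h ▸ List.idxOf_lt_length_iff.mpr hv)]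
  erw [List.length_map]

lemma replace_ext_len (H : HGraph C) (e : H.E) (R : HGraph C) (h) :
    (H.replace e R h).ext.length = H.ext.length := by rw [replace_ext]; erw [List.length_map]

/-- All labels different from `T`. -/
def NoLab (T : C) (H : HGraph C) : Prop := ∀ e : H.E, H.lab e ≠ T

lemma noLab_iso {T : C} {H K : HGraph C} (i : Iso H K) (h : NoLab T H) : NoLab T K := by
  intro e
  have := i.lab_eq (i.eEquiv.symm e)
  rw [Equiv.apply_symm_apply] at this
  rw [← this]
  exact h _

lemma noLab_replace {T : C} {H R : HGraph C} {e : H.E} {hl}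
    (hH : NoLab T H) (hR : NoLab T R) : NoLab T (H.replace e R hl) := by
  rintro (⟨e', hne⟩ | f)
  · exact hH e'
  · exact hR f

/-- Derivations interleaved with isomorphism jumps. -/
def DI (P : Set (C × HGraph C)) : HGraph C → HGraph C → Prop :=
  Relation.ReflTransGen (fun a b => Step P a b ∨ Nonempty (Iso a b))

lemma step_iso_target {P : Set (C × HGraph C)} {H K K' : HGraph C}
    (h : Step P H K) (j : Iso K' K) : Step P H K' := by
  obtain ⟨p, hp, e, hle, hl, ⟨i⟩⟩ := h
  exact ⟨p, hp, e, hle, hl, ⟨j.trans i⟩⟩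

lemma step_iso_source {P : Set (C × HGraph C)} {H H' K : HGraph C}
    (i : Iso H' H) (h : Step P H K) : Step P H' K := by
  obtain ⟨p, hp, e, hle, hl, ⟨j⟩⟩ := h
  have he : i.eEquiv (i.eEquiv.symm e) = e := i.eEquiv.apply_symm_apply e
  have hl₂ : p.2.ext.length = (H'.att (i.eEquiv.symm e)).length := by
    rw [hl, ← att_len i (i.eEquiv.symm e), he]
  have hl' : p.2.ext.length = (H.att (i.eEquiv (i.eEquiv.symm e))).length := by rw [he]; exact hl
  refine ⟨p, hp, i.eEquiv.symm e, ?_, hl₂, ⟨?_⟩⟩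
  · rw [i.lab_eq (i.eEquiv.symm e), he, hle]
  · exact j.trans (((isoReplaceLeft i (i.eEquiv.symm e) p.2 hl₂ hl').trans
      (isoReplaceEdgeCongr H he p.2 hl' hl)).symm)

lemma di_compress {P : Set (C × HGraph C)} {H K : HGraph C} (h : DI P H K) :
    Derives P H K ∨ Nonempty (Iso H K) := by
  induction h using Relation.ReflTransGen.head_induction_on with
  | refl => exact Or.inr ⟨Iso.refl _⟩
  | head hab hbk ih =>
    rcases hab with hstep | hiso
    · rcases ih with hd | hj
      · exact Or.inl (Relation.ReflTransGen.head hstep hd)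
      · obtain ⟨j⟩ := hj
        exact Or.inl (Relation.ReflTransGen.single (step_iso_target hstep j.symm))
    · obtain ⟨i⟩ := hiso
      rcases ih with hd | hj
      · rcases (Relation.ReflTransGen.cases_head hd) with rfl | ⟨m, hm, hmk⟩
        · exact Or.inr ⟨i⟩
        · exact Or.inl (Relation.ReflTransGen.head (step_iso_source i hm) hmk)
      · obtain ⟨j⟩ := hj
        exact Or.inr ⟨i.trans j⟩

lemma di_noLab_iso {T : C} {X K K₁ : HGraph C} (h : DI {(T, X)} K K₁)
    (hK : NoLab T K) : Nonempty (Iso K K₁) := by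
  induction h using Relation.ReflTransGen.head_induction_on with
  | refl => exact ⟨Iso.refl _⟩
  | head hab hbk ih =>
    rcases hab with hstep | hiso
    · obtain ⟨p', hp', f, hlabf, -⟩ := hstep
      rw [Set.mem_singleton_iff] at hp'; subst hp'
      exact absurd hlabf (hK f)
    · obtain ⟨i⟩ := hiso
      obtain ⟨j⟩ := ih (noLab_iso i hK)
      exact ⟨i.trans j⟩

/-- Pulling an (unrelated) replacement through a sequence of `(T,X)`-expansions. -/
lemma pull_replace {T : C} {X : HGraph C} {H K₁ : HGraph C}
    (h : DI {(T, X)} H K₁) :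
    ∀ (e : H.E) (Q : HGraph C), H.lab e ≠ T →
    ∀ (hl : Q.ext.length = (H.att e).length),
    ∃ (e₀ : K₁.E) (hl₀ : Q.ext.length = (K₁.att e₀).length),
      K₁.lab e₀ = H.lab e ∧ DI {(T, X)} (H.replace e Q hl) (K₁.replace e₀ Q hl₀) := by
  induction h using Relation.ReflTransGen.head_induction_on with
  | refl => exact fun e Q _ hl => ⟨e, hl, rfl, Relation.ReflTransGen.refl⟩
  | @head H b hab hbk ih =>
    intro e Q hlab hl
    rcases hab with hstep | hiso
    · obtain ⟨p', hp', f, hlabf, hlf, hrep⟩ := hstep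
      rw [Set.mem_singleton_iff] at hp'; subst hp'
      obtain ⟨jb⟩ := hrep
      have hef : e ≠ f := fun hh => hlab (by rw [hh]; exact hlabf)
      set e' := jb.eEquiv.symm (Sum.inl ⟨e, hef⟩) with he'def
      have he' : jb.eEquiv e' = Sum.inl ⟨e, hef⟩ := jb.eEquiv.apply_symm_apply _
      have hlabe' : _root_.id (HGraph.lab _ e') = _root_.id (HGraph.lab _ e) := by
        show HGraph.lab _ e' = HGraph.lab _ e
        rw [jb.lab_eq e', he', replace_lab_inl]
      have hlabe'2 : HGraph.lab _ e' ≠ T := by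
        rw [show HGraph.lab _ e' = HGraph.lab _ e from hlabe']; exact hlab
      have hl' : Q.ext.length = (HGraph.att _ e').length := by
        rw [hl]
        have := att_len jb e'
        rw [he'] at this
        rw [← this, replace_att_inl]
        erw [List.length_map]
      obtain ⟨e₀, hl₀, hlab₀, dib⟩ := ih e' Q hlabe'2 hl'
      refine ⟨e₀, hl₀, hlab₀.trans hlabe', ?_⟩
      have hlfx : X.ext.length = ((H.replace e Q hl).att (Sum.inl ⟨f, Ne.symm hef⟩)).length := by
        rw [replace_att_inl]; erw [List.length_map]; exact hlf
      have hl₂ : Q.ext.length = ((H.replace f X hlf).att (Sum.inl ⟨e, hef⟩)).length := by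
        rw [replace_att_inl]; erw [List.length_map]; exact hl
      have step1 : Step {(T, X)} (H.replace e Q hl)
          ((H.replace e Q hl).replace (Sum.inl ⟨f, Ne.symm hef⟩) X hlfx) := by
        refine ⟨(T, X), rfl, Sum.inl ⟨f, Ne.symm hef⟩, ?_, hlfx, ⟨Iso.refl _⟩⟩
        rw [replace_lab_inl]; exact hlabf
      have iso2 : Iso ((H.replace e Q hl).replace (Sum.inl ⟨f, Ne.symm hef⟩) X hlfx)
          ((H.replace f X hlf).replace (Sum.inl ⟨e, hef⟩) Q hl₂) :=
        isoComm H hef Q X hl hlfx hlf hl₂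
      have iso3 : Iso ((H.replace f X hlf).replace (Sum.inl ⟨e, hef⟩) Q hl₂)
          (HGraph.replace _ e' Q hl') :=
        isoReplaceLeft jb.symm (Sum.inl ⟨e, hef⟩) Q hl₂ hl'
      exact Relation.ReflTransGen.head (Or.inl step1)
        (Relation.ReflTransGen.head (Or.inr ⟨iso2.trans iso3⟩) dib)
    · obtain ⟨i⟩ := hiso
      have hlabe' : HGraph.lab _ (i.eEquiv e) = H.lab e := (i.lab_eq e).symm
      have hl' : Q.ext.length = (HGraph.att _ (i.eEquiv e)).length := by
        rw [hl, att_len i e]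
      obtain ⟨e₀, hl₀, hlab₀, dib⟩ := ih (i.eEquiv e) Q (by rw [hlabe']; exact hlab) hl'
      exact ⟨e₀, hl₀, hlab₀.trans hlabe',
        Relation.ReflTransGen.head (Or.inr ⟨isoReplaceLeft i e Q hl hl'⟩) dib⟩

/-- Absorbing one `(T,X)`-expansion step into a full expansion. -/
lemma pull_expand {T : C} {X : HGraph C} {H K₁ : HGraph C}
    (h : DI {(T, X)} H K₁) (hK₁ : NoLab T K₁) :
    ∀ (e : H.E), H.lab e = T → ∀ (hl : X.ext.length = (H.att e).length),
    DI {(T, X)} (H.replace e X hl) K₁ := by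
  induction h using Relation.ReflTransGen.head_induction_on with
  | refl => exact fun e hlab _ => absurd hlab (hK₁ e)
  | @head H b hab hbk ih =>
    intro e hlab hl
    rcases hab with hstep | hiso
    · obtain ⟨p', hp', f, hlabf, hlf, hrep⟩ := hstep
      rw [Set.mem_singleton_iff] at hp'; subst hp'
      obtain ⟨jb⟩ := hrep
      by_cases hef : e = f
      · subst hef
        exact Relation.ReflTransGen.head (Or.inr ⟨jb.symm⟩) hbk
      · set e' := jb.eEquiv.symm (Sum.inl ⟨e, hef⟩) with he'def
        have he' : jb.eEquiv e' = Sum.inl ⟨e, hef⟩ := jb.eEquiv.apply_symm_apply _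
        have hlabe' : HGraph.lab _ e' = T := by
          rw [jb.lab_eq e', he', replace_lab_inl]; exact hlab
        have hl' : X.ext.length = (HGraph.att _ e').length := by
          rw [hl]
          have := att_len jb e'
          rw [he'] at this
          rw [← this, replace_att_inl]
          erw [List.length_map]
        have hlfx : X.ext.length = ((H.replace e X hl).att (Sum.inl ⟨f, Ne.symm hef⟩)).length := by
          rw [replace_att_inl]; erw [List.length_map]; exact hlf
        have hl₂ : X.ext.length = ((H.replace f X hlf).att (Sum.inl ⟨e, hef⟩)).length := by
          rw [replace_att_inl]; erw [List.length_map]; exact hl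
        have step1 : Step {(T, X)} (H.replace e X hl)
            ((H.replace e X hl).replace (Sum.inl ⟨f, Ne.symm hef⟩) X hlfx) := by
          refine ⟨(T, X), rfl, Sum.inl ⟨f, Ne.symm hef⟩, ?_, hlfx, ⟨Iso.refl _⟩⟩
          rw [replace_lab_inl]; exact hlabf
        have iso2 : Iso ((H.replace e X hl).replace (Sum.inl ⟨f, Ne.symm hef⟩) X hlfx)
            ((H.replace f X hlf).replace (Sum.inl ⟨e, hef⟩) X hl₂) :=
          isoComm H hef X X hl hlfx hlf hl₂
        have iso3 : Iso ((H.replace f X hlf).replace (Sum.inl ⟨e, hef⟩) X hl₂)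
            (HGraph.replace _ e' X hl') :=
          isoReplaceLeft jb.symm (Sum.inl ⟨e, hef⟩) X hl₂ hl'
        exact Relation.ReflTransGen.head (Or.inl step1)
          (Relation.ReflTransGen.head (Or.inr ⟨iso2.trans iso3⟩) (ih e' hlabe' hl'))
    · obtain ⟨i⟩ := hiso
      have hlabe' : HGraph.lab _ (i.eEquiv e) = T := by rw [← i.lab_eq e]; exact hlab
      have hl' : X.ext.length = (HGraph.att _ (i.eEquiv e)).length := by
        rw [hl, att_len i e]
      exact Relation.ReflTransGen.head (Or.inr ⟨isoReplaceLeft i e X hl hl'⟩)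
        (ih (i.eEquiv e) hlabe' hl')

end HGraph

open HGraph

/-- Chomsky normal form transformation step (rhs splitting):
if `p = (A, R)` has more than two hyperedges in `R`, `T` is a fresh
non-terminal not occurring in the grammar, `X` is the subgraph consisting of
all but one hyperedge of `R`, and `R'` is `R` with those hyperedges replaced by
a single `T`-labelled hyperedge `e_T` — so that `R ≅ R'[e_T/X]` — then
replacing `p` by the two productions `(A, R')` and `(T, X)` yields a grammar
generating the same language. -/
theorem rhs_splitting {C : Type} (Tm : Set C)
    (P : Set (C × HGraph C)) (S : C) (tyS : ℕ)
    (A T : C) (R R' X : HGraph C) (hp : (A, R) ∈ P)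
    (hbig : 2 < Nat.card R.E)
    (eT : R'.E) (hlabT : R'.lab eT = T)
    (hlen : X.ext.length = (R'.att eT).length)
    (hiso : Nonempty (HGraph.Iso R (R'.replace eT X hlen)))
    (hfreshP : ∀ q ∈ P, q.1 ≠ T ∧ ∀ e : q.2.E, q.2.lab e ≠ T)
    (hfreshR' : ∀ e : R'.E, e ≠ eT → R'.lab e ≠ T)
    (hfreshX : ∀ e : X.E, X.lab e ≠ T)
    (hTS : T ≠ S) (hTTm : T ∉ Tm) :
    HGraph.Lang ((P \ {(A, R)}) ∪ {(A, R'), (T, X)}) Tm S tyS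
      = HGraph.Lang P Tm S tyS := by
  classical
  obtain ⟨jR⟩ := hiso
  set P' : Set (C × HGraph C) := (P \ {(A, R)}) ∪ {(A, R'), (T, X)} with hP'
  have hAT : A ≠ T := (hfreshP (A, R) hp).1
  have hRnoT : NoLab T R := (hfreshP (A, R) hp).2
  have hHdlnoT : NoLab T (handle S tyS) := fun e h => hTS h.symm
  have hRR'len : R.ext.length = R'.ext.length := by
    have h1 := ext_len jR
    rw [replace_ext_len] at h1
    exact h1.symm
  -- Forward direction: derivations of the original grammar are simulated by the new one.
  have forward : ∀ K, Derives P (handle S tyS) K → Derives P' (handle S tyS) K := by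
    intro K h
    replace h : Relation.ReflTransGen (Step P) (handle S tyS) K := h
    induction h with
    | refl => exact Relation.ReflTransGen.refl
    | @tail b c hd hstep ih =>
      obtain ⟨q, hq, e, hlabe, hl, hrep⟩ := hstep
      obtain ⟨j⟩ := hrep
      by_cases hqp : q = (A, R)
      · subst hqp
        have hlR' : R'.ext.length = (b.att e).length := by rw [← hRR'len]; exact hl
        have s1 : Step P' b (b.replace e R' hlR') :=
          ⟨(A, R'), Set.mem_union_right _ (Set.mem_insert _ _), e, hlabe, hlR', ⟨Iso.refl _⟩⟩
        have hY : (R'.replace eT X hlen).ext.length = (b.att e).length := by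
          rw [replace_ext_len]; exact hlR'
        have hl2 : X.ext.length = ((b.replace e R' hlR').att (Sum.inr eT)).length := by
          rw [replace_att_inr_len]; exact hlen
        have s2 : Step P' (b.replace e R' hlR') c := by
          refine ⟨(T, X), Set.mem_union_right _ (Set.mem_insert_of_mem _ rfl),
            Sum.inr eT, ?_, hl2, ⟨?_⟩⟩
          · rw [replace_lab_inr]; exact hlabT
          · exact j.trans ((isoReplaceRight e jR hl hY).trans
              (isoAssoc b e R' X eT hlen hY hlR' hl2))
        exact Relation.ReflTransGen.tail (Relation.ReflTransGen.tail ih s1) s2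
      · have hmem : q ∈ P' := Set.mem_union_left _ ⟨hq, by simpa using hqp⟩
        exact Relation.ReflTransGen.tail ih ⟨q, hmem, e, hlabe, hl, ⟨j⟩⟩
  -- Reverse direction invariant.
  have reverse : ∀ K, Derives P' (handle S tyS) K →
      ∃ K₁, DI {(T, X)} K K₁ ∧ NoLab T K₁ ∧ Derives P (handle S tyS) K₁ ∧
        (K = handle S tyS ∨ ∃ M, Derives P (handle S tyS) M ∧ Step P M K₁) := by
    intro K h
    replace h : Relation.ReflTransGen (Step P') (handle S tyS) K := h
    induction h with
    | refl => exact ⟨handle S tyS, Relation.ReflTransGen.refl, hHdlnoT,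
        Relation.ReflTransGen.refl, Or.inl rfl⟩
    | @tail b c hd hstep ih =>
      obtain ⟨K₁, dik, hnoT, derP, hbranch⟩ := ih
      obtain ⟨q, hq, e, hlabe, hl, hrep⟩ := hstep
      obtain ⟨j⟩ := hrep
      rcases hq with hqP | hq2
      · -- a production of the original grammar other than (A, R)
        have hqT : q.1 ≠ T := (hfreshP q hqP.1).1
        have hQnoT : NoLab T q.2 := (hfreshP q hqP.1).2
        have hlabne : b.lab e ≠ T := by rw [hlabe]; exact hqT
        obtain ⟨e₀, hl₀, hlab₀, direp⟩ := pull_replace dik e q.2 hlabne hl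
        have stepP : Step P K₁ (K₁.replace e₀ q.2 hl₀) :=
          ⟨q, hqP.1, e₀, hlab₀.trans hlabe, hl₀, ⟨Iso.refl _⟩⟩
        exact ⟨K₁.replace e₀ q.2 hl₀,
          Relation.ReflTransGen.head (Or.inr ⟨j⟩) direp,
          noLab_replace hnoT hQnoT, Relation.ReflTransGen.tail derP stepP,
          Or.inr ⟨K₁, derP, stepP⟩⟩
      · rw [Set.mem_insert_iff, Set.mem_singleton_iff] at hq2
        rcases hq2 with rfl | rfl
        · -- the production (A, R')
          have hlabne : b.lab e ≠ T := by rw [hlabe]; exact hAT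
          have hlR : R.ext.length = (b.att e).length := by rw [hRR'len]; exact hl
          obtain ⟨e₀, hl₀, hlab₀, direp⟩ := pull_replace dik e R hlabne hlR
          have stepP : Step P K₁ (K₁.replace e₀ R hl₀) :=
            ⟨(A, R), hp, e₀, hlab₀.trans hlabe, hl₀, ⟨Iso.refl _⟩⟩
          have hY : (R'.replace eT X hlen).ext.length = (b.att e).length := by
            rw [replace_ext_len]; exact hl
          have hl2 : X.ext.length = ((b.replace e R' hl).att (Sum.inr eT)).length := by
            rw [replace_att_inr_len]; exact hlen
          have stepTX : Step {(T, X)} (b.replace e R' hl) (b.replace e R hlR) := by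
            refine ⟨(T, X), rfl, Sum.inr eT, ?_, hl2, ⟨?_⟩⟩
            · rw [replace_lab_inr]; exact hlabT
            · exact (isoReplaceRight e jR hlR hY).trans (isoAssoc b e R' X eT hlen hY hl hl2)
          exact ⟨K₁.replace e₀ R hl₀,
            Relation.ReflTransGen.head (Or.inr ⟨j⟩)
              (Relation.ReflTransGen.head (Or.inl stepTX) direp),
            noLab_replace hnoT hRnoT, Relation.ReflTransGen.tail derP stepP,
            Or.inr ⟨K₁, derP, stepP⟩⟩
        · -- the production (T, X)
          have hbranch' : ∃ M, Derives P (handle S tyS) M ∧ Step P M K₁ := by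
            rcases hbranch with rfl | hb
            · exact absurd hlabe (hHdlnoT e)
            · exact hb
          exact ⟨K₁,
            Relation.ReflTransGen.head (Or.inr ⟨j⟩) (pull_expand dik hnoT e hlabe hl),
            hnoT, derP, Or.inr hbranch'⟩
  -- Conclusion.
  ext K
  simp only [Lang, Set.mem_setOf_eq]
  constructor
  · rintro ⟨hder, hterm⟩
    refine ⟨?_, hterm⟩
    obtain ⟨K₁, dik, hnoT, derP, hbranch⟩ := reverse K hder
    have hKnoT : NoLab T K := fun e he => hTTm (he ▸ hterm e)
    obtain ⟨jKK₁⟩ := di_noLab_iso dik hKnoT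
    rcases hbranch with rfl | ⟨M, dM, sM⟩
    · exact Relation.ReflTransGen.refl
    · exact Relation.ReflTransGen.tail dM (step_iso_target sM jKK₁)
  · rintro ⟨hder, hterm⟩
    exact ⟨forward K hder, hterm⟩
end
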